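/- Let n ≥ 1, let ξ ∈ ℝⁿ, and let α ∈ ℝ. Then: (i) σ_{α,ξ}(ξξᵀ) = (1+2α)‖ξ‖²·(ξξᵀ); (ii) for every symmetric real n×n matrix h with hξ = 0 one has σ_{α,ξ}(h) = ‖ξ‖²·h; (iii) for every v ∈ ℝⁿ with ⟨v,ξ⟩ = 0 one has σ_{α,ξ}(ξvᵀ + vξᵀ) = (1+α)‖ξ‖²·(ξvᵀ + vξᵀ). In particular the symbol acts on symmetric matrices with the three eigenvalues ‖ξ‖², (1+α)‖ξ‖², (1+2α)‖ξ‖² on these respective subspaces. -/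
import Mathlib


open Matrix

/-- The principal symbol (up to overall sign) of the operator `L_{g,γ,α}` from the
modified spatial harmonic gauge: `σ_{α,ξ}(h) = ‖ξ‖²·h + α·(ξ(hξ)ᵀ + (hξ)ξᵀ)`. -/
noncomputable def sigmaSymb {n : ℕ} (α : ℝ) (ξ : Fin n → ℝ)
    (h : Matrix (Fin n) (Fin n) ℝ) : Matrix (Fin n) (Fin n) ℝ :=
  (ξ ⬝ᵥ ξ) • h + α • (vecMulVec ξ (h.mulVec ξ) + vecMulVec (h.mulVec ξ) ξ)

lemma vecMulVec_mulVec {n : ℕ} (a b ξ : Fin n → ℝ) :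
    (vecMulVec a b).mulVec ξ = (b ⬝ᵥ ξ) • a := by
  ext i
  simp only [vecMulVec, mulVec, dotProduct, of_apply, Pi.smul_apply, smul_eq_mul,
    Finset.sum_mul]
  exact Finset.sum_congr rfl fun x _ => by ring

theorem stmt3 (n : ℕ) (hn : 1 ≤ n) (ξ : Fin n → ℝ) (α : ℝ) :
    sigmaSymb α ξ (vecMulVec ξ ξ) = ((1 + 2 * α) * (ξ ⬝ᵥ ξ)) • vecMulVec ξ ξ ∧
    (∀ h : Matrix (Fin n) (Fin n) ℝ, h.IsSymm → h.mulVec ξ = 0 →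
      sigmaSymb α ξ h = (ξ ⬝ᵥ ξ) • h) ∧
    (∀ v : Fin n → ℝ, v ⬝ᵥ ξ = 0 →
      sigmaSymb α ξ (vecMulVec ξ v + vecMulVec v ξ)
        = ((1 + α) * (ξ ⬝ᵥ ξ)) • (vecMulVec ξ v + vecMulVec v ξ)) := by
  refine ⟨?_, ?_, ?_⟩
  · simp only [sigmaSymb, vecMulVec_mulVec]
    ext i j
    simp [vecMulVec, smul_eq_mul]
    ring
  · intro h _ h0
    simp [sigmaSymb, h0, vecMulVec]
    ext i j
    simp
  · intro v hv
    have hvξ : ξ ⬝ᵥ v = 0 := by rwa [dotProduct_comm] at hv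
    simp only [sigmaSymb, add_mulVec, vecMulVec_mulVec, hv, hvξ, zero_smul, smul_zero,
      zero_add, add_zero]
    ext i j
    simp [vecMulVec, smul_eq_mul]
    ring
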